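/- Let G be a Garside group with positive monoid G⁺ and Garside element Δ, and let g ∈ G be in its super summit set: for every conjugate h of g and every integer t, Δ^t ≤_L h implies Δ^t ≤_L g, and h ≤_L Δ^t implies g ≤_L Δ^t. Then for every n ≥ 1: n·(|g|_𝒟 − 2) < |gⁿ|_𝒟 ≤ n·|g|_𝒟. -/

import Mathlib

/-- `a` left-divides `b` in the monoid `M`. -/
def dvdL {M : Type*} [Monoid M] (a b : M) : Prop := ∃ c, a * c = b

/-- `a` right-divides `b` in the monoid `M`. -/
def dvdR {M : Type*} [Monoid M] (a b : M) : Prop := ∃ c, c * a = b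

/-- `L(a)`, the set of left divisors of `a`. -/
def Lset {M : Type*} [Monoid M] (a : M) : Set M := {x | dvdL x a}

/-- `R(a)`, the set of right divisors of `a`. -/
def Rset {M : Type*} [Monoid M] (a : M) : Set M := {x | dvdR x a}

/-- `a` is an atom: `a ≠ 1` and `a = b * c` implies `b = 1` or `c = 1`. -/
def IsAtomElt {M : Type*} [Monoid M] (a : M) : Prop :=
  a ≠ 1 ∧ ∀ b c : M, a = b * c → b = 1 ∨ c = 1

/-- `M` is atomic: every element is a finite product of atoms, and the lengths of
expressions of a given element as products of atoms are bounded above. -/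
def Atomic (M : Type*) [Monoid M] : Prop :=
  (∀ a : M, ∃ l : List M, (∀ x ∈ l, IsAtomElt x) ∧ l.prod = a) ∧
  (∀ a : M, ∃ N : ℕ, ∀ l : List M, (∀ x ∈ l, IsAtomElt x) → l.prod = a → l.length ≤ N)

/-- `Δ` is a Garside element: `L(Δ) = R(Δ)` and `L(Δ)` generates `M`. -/
def IsGarsideElt {M : Type*} [Monoid M] (Δ : M) : Prop :=
  Lset Δ = Rset Δ ∧ Submonoid.closure (Lset Δ) = ⊤

/-- `d` is a greatest common lower bound of `a` and `b` with respect to `≤_L`. -/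
def IsGlbL {M : Type*} [Monoid M] (a b d : M) : Prop :=
  dvdL d a ∧ dvdL d b ∧ ∀ c : M, dvdL c a → dvdL c b → dvdL c d

/-- `d` is a least common upper bound of `a` and `b` with respect to `≤_L`. -/
def IsLubL {M : Type*} [Monoid M] (a b d : M) : Prop :=
  dvdL a d ∧ dvdL b d ∧ ∀ c : M, dvdL a c → dvdL b c → dvdL d c

/-- `d` is a greatest common lower bound of `a` and `b` with respect to `≤_R`. -/
def IsGlbR {M : Type*} [Monoid M] (a b d : M) : Prop :=
  dvdR d a ∧ dvdR d b ∧ ∀ c : M, dvdR c a → dvdR c b → dvdR c d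

/-- `d` is a least common upper bound of `a` and `b` with respect to `≤_R`. -/
def IsLubR {M : Type*} [Monoid M] (a b d : M) : Prop :=
  dvdR a d ∧ dvdR b d ∧ ∀ c : M, dvdR a c → dvdR b c → dvdR d c

/-- `M` is a Garside monoid: finitely generated, left and right cancellative, atomic,
`≤_L`- and `≤_R`-lattice conditions, and it possesses a Garside element. -/
def IsGarsideMonoid (M : Type*) [Monoid M] : Prop :=
  (∃ S : Set M, S.Finite ∧ Submonoid.closure S = ⊤) ∧
  (∀ a b c : M, a * b = a * c → b = c) ∧
  (∀ a b c : M, b * a = c * a → b = c) ∧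
  Atomic M ∧
  (∀ a b : M, ∃ d, IsGlbL a b d) ∧
  (∀ a b : M, ∃ d, IsLubL a b d) ∧
  (∀ a b : M, ∃ d, IsGlbR a b d) ∧
  (∀ a b : M, ∃ d, IsLubR a b d) ∧
  (∃ Δ : M, IsGarsideElt Δ)

/-- Group-level left divisibility: `a ≤_L b` iff `a⁻¹ * b` is positive. -/
def gdvdL {G : Type*} [Group G] (P : Submonoid G) (a b : G) : Prop := a⁻¹ * b ∈ P

/-- Group-level right divisibility: `a ≤_R b` iff `b * a⁻¹` is positive. -/
def gdvdR {G : Type*} [Group G] (P : Submonoid G) (a b : G) : Prop := b * a⁻¹ ∈ P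

/-- `G` is a Garside group with positive monoid `P` and chosen Garside element `Δ`:
`P` is a Garside monoid, every element of `G` is a fraction `a * b⁻¹` of positive
elements, and `Δ` is a Garside element of `P`. -/
def IsGarsideGroup {G : Type*} [Group G] (P : Submonoid G) (Δ : G) : Prop :=
  IsGarsideMonoid P ∧
  (∀ g : G, ∃ a b : P, g = (a : G) * (b : G)⁻¹) ∧
  ∃ hΔ : Δ ∈ P, IsGarsideElt (⟨Δ, hΔ⟩ : P)

/-- The set `𝒟 = L(Δ)` of simple elements, viewed as a subset of the group `G`. -/
def simples {G : Type*} [Group G] (P : Submonoid G) (Δ : G) : Set G :=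
  {x : G | x ∈ P ∧ x⁻¹ * Δ ∈ P}

/-- The set of lengths of expressions of `g` as a product of elements of `S ∪ S⁻¹`. -/
def wlenSet {G : Type*} [Group G] (S : Set G) (g : G) : Set ℕ :=
  {ℓ : ℕ | ∃ L : List G, (∀ x ∈ L, x ∈ S ∪ S⁻¹) ∧ L.length = ℓ ∧ L.prod = g}

namespace Gar

variable {G : Type*} [Group G]

structure Ctx (P : Submonoid G) (Δ : G) : Prop where
  dmem : Δ ∈ P
  frac : ∀ g : G, ∃ a ∈ P, ∃ b ∈ P, g = a * b⁻¹
  unit : ∀ x ∈ P, x⁻¹ ∈ P → x = 1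
  gen : ∀ p ∈ P, ∃ l : List G, (∀ x ∈ l, x ∈ simples P Δ) ∧ l.prod = p
  lr : ∀ x ∈ P, (x⁻¹ * Δ ∈ P ↔ Δ * x⁻¹ ∈ P)
  meetL : ∀ a ∈ P, ∀ b ∈ P, ∃ d ∈ P, d⁻¹*a ∈ P ∧ d⁻¹*b ∈ P ∧
      ∀ c ∈ P, c⁻¹*a ∈ P → c⁻¹*b ∈ P → c⁻¹*d ∈ P
  joinL : ∀ a ∈ P, ∀ b ∈ P, ∃ d ∈ P, a⁻¹*d ∈ P ∧ b⁻¹*d ∈ P ∧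
      ∀ c ∈ P, a⁻¹*c ∈ P → b⁻¹*c ∈ P → d⁻¹*c ∈ P
  meetR : ∀ a ∈ P, ∀ b ∈ P, ∃ d ∈ P, a*d⁻¹ ∈ P ∧ b*d⁻¹ ∈ P ∧
      ∀ c ∈ P, a*c⁻¹ ∈ P → b*c⁻¹ ∈ P → d*c⁻¹ ∈ P
  joinR : ∀ a ∈ P, ∀ b ∈ P, ∃ d ∈ P, d*a⁻¹ ∈ P ∧ d*b⁻¹ ∈ P ∧
      ∀ c ∈ P, c*a⁻¹ ∈ P → c*b⁻¹ ∈ P → c*d⁻¹ ∈ P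

variable {P : Submonoid G} {Δ : G}

theorem Ctx.delta_simple (C : Ctx P Δ) : Δ ∈ simples P Δ :=
  ⟨C.dmem, by simpa using P.one_mem⟩

theorem Ctx.one_simple (C : Ctx P Δ) : (1 : G) ∈ simples P Δ :=
  ⟨P.one_mem, by simpa using C.dmem⟩

theorem Ctx.simple_compl (C : Ctx P Δ) {x : G} (hx : x ∈ simples P Δ) :
    x⁻¹ * Δ ∈ simples P Δ := by
  refine ⟨hx.2, ?_⟩
  have h2 : Δ * (x⁻¹ * Δ)⁻¹ ∈ P := by
    have : Δ * (x⁻¹ * Δ)⁻¹ = x := by group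
    rw [this]; exact hx.1
  exact (C.lr _ hx.2).2 h2

theorem Ctx.mem_conjL (C : Ctx P Δ) {x : G} (hx : x ∈ simples P Δ) :
    Δ⁻¹ * x * Δ ∈ P := by
  have hz := C.simple_compl hx
  have : Δ⁻¹ * x * Δ = (x⁻¹ * Δ)⁻¹ * Δ := by group
  rw [this]; exact hz.2

theorem Ctx.simple_conjL (C : Ctx P Δ) {x : G} (hx : x ∈ simples P Δ) :
    Δ⁻¹ * x * Δ ∈ simples P Δ := by
  refine ⟨C.mem_conjL hx, ?_⟩
  have : (Δ⁻¹ * x * Δ)⁻¹ * Δ = Δ⁻¹ * (x⁻¹ * Δ) * Δ := by group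
  rw [this]; exact C.mem_conjL (C.simple_compl hx)

theorem Ctx.simple_conjR (C : Ctx P Δ) {x : G} (hx : x ∈ simples P Δ) :
    Δ * x * Δ⁻¹ ∈ simples P Δ := by
  obtain ⟨hxP, hxd⟩ := hx
  have hw : Δ * x⁻¹ ∈ P := (C.lr x hxP).1 hxd
  have hwsimple : (Δ * x⁻¹) ∈ simples P Δ := by
    refine ⟨hw, ?_⟩
    have : (Δ * x⁻¹)⁻¹ * Δ = x := by group
    rw [this]; exact hxP
  have hmem : Δ * x * Δ⁻¹ ∈ P := by
    have h2 : Δ * (Δ * x⁻¹)⁻¹ ∈ P := (C.lr _ hw).1 hwsimple.2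
    have : Δ * (Δ * x⁻¹)⁻¹ = Δ * x * Δ⁻¹ := by group
    rwa [this] at h2
  refine ⟨hmem, ?_⟩
  have : (Δ * x * Δ⁻¹)⁻¹ * Δ = Δ * x⁻¹ := by group
  rw [this]; exact hw

/-- conjugation by `Δ⁻¹` preserves positives -/
theorem Ctx.list_conj (C : Ctx P Δ) (l : List G) (hl : ∀ x ∈ l, x ∈ simples P Δ) :
    Δ⁻¹ * l.prod * Δ ∈ P ∧ Δ * l.prod * Δ⁻¹ ∈ P := by
  induction l with
  | nil => constructor <;> simpa using P.one_mem
  | cons a t ih =>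
    obtain ⟨ih1, ih2⟩ := ih (fun x hx => hl x (by simp [hx]))
    have ha := hl a (by simp)
    constructor
    · have : Δ⁻¹ * (a :: t).prod * Δ = (Δ⁻¹ * a * Δ) * (Δ⁻¹ * t.prod * Δ) := by
        simp [List.prod_cons]; group
      rw [this]; exact P.mul_mem (C.mem_conjL ha) ih1
    · have : Δ * (a :: t).prod * Δ⁻¹ = (Δ * a * Δ⁻¹) * (Δ * t.prod * Δ⁻¹) := by
        simp only [List.prod_cons]; group
      rw [this]; exact P.mul_mem (C.simple_conjR ha).1 ih2

theorem Ctx.mem_conjL' (C : Ctx P Δ) {p : G} (hp : p ∈ P) : Δ⁻¹ * p * Δ ∈ P := by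
  obtain ⟨l, hl, rfl⟩ := C.gen p hp
  exact (C.list_conj l hl).1

theorem Ctx.mem_conjR' (C : Ctx P Δ) {p : G} (hp : p ∈ P) : Δ * p * Δ⁻¹ ∈ P := by
  obtain ⟨l, hl, rfl⟩ := C.gen p hp
  exact (C.list_conj l hl).2

/-- conjugation by arbitrary powers of Δ preserves positives. -/
theorem Ctx.zconj_mem (C : Ctx P Δ) (j : ℤ) {p : G} (hp : p ∈ P) :
    Δ ^ j * p * Δ ^ (-j) ∈ P := by
  induction j using Int.induction_on with
  | zero => simpa using hp
  | succ k ih =>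
    have := C.mem_conjR' ih
    have e : Δ ^ ((k:ℤ)+1) * p * Δ ^ (-((k:ℤ)+1)) = Δ * (Δ ^ (k:ℤ) * p * Δ ^ (-(k:ℤ))) * Δ⁻¹ := by
      group
    rw [e]; exact this
  | pred k ih =>
    have := C.mem_conjL' ih
    have e : Δ ^ (-(k:ℤ)-1) * p * Δ ^ (-(-(k:ℤ)-1)) = Δ⁻¹ * (Δ ^ (-(k:ℤ)) * p * Δ ^ (k:ℤ)) * Δ := by
      group
    rw [e]
    have e2 : Δ ^ (-(k:ℤ)) * p * Δ ^ (k:ℤ) = Δ ^ (-(k:ℤ)) * p * Δ ^ (-(-(k:ℤ))) := by norm_num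
    rw [e2]; exact this

theorem Ctx.zconj_mem_iff (C : Ctx P Δ) (j : ℤ) {p : G} :
    Δ ^ j * p * Δ ^ (-j) ∈ P ↔ p ∈ P := by
  constructor
  · intro h
    have := C.zconj_mem (-j) h
    simpa [mul_assoc, ← zpow_add] using this
  · exact C.zconj_mem j

theorem Ctx.zconj_simple (C : Ctx P Δ) (j : ℤ) {x : G} (hx : x ∈ simples P Δ) :
    Δ ^ j * x * Δ ^ (-j) ∈ simples P Δ := by
  induction j using Int.induction_on with
  | zero => simpa using hx
  | succ k ih =>
    have := C.simple_conjR ih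
    have e : Δ ^ ((k:ℤ)+1) * x * Δ ^ (-((k:ℤ)+1)) = Δ * (Δ ^ (k:ℤ) * x * Δ ^ (-(k:ℤ))) * Δ⁻¹ := by
      group
    rw [e]; exact this
  | pred k ih =>
    have := C.simple_conjL ih
    have e : Δ ^ (-(k:ℤ)-1) * x * Δ ^ (-(-(k:ℤ)-1)) = Δ⁻¹ * (Δ ^ (-(k:ℤ)) * x * Δ ^ (-(-(k:ℤ)))) * Δ := by
      group
    rw [e]; exact this

/-! ### powers of Δ and order basics -/

theorem Ctx.dpow_mem (C : Ctx P Δ) {c : ℤ} (hc : 0 ≤ c) : Δ ^ c ∈ P := by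
  obtain ⟨m, rfl⟩ := Int.eq_ofNat_of_zero_le hc
  rw [zpow_natCast]
  exact pow_mem C.dmem m

theorem Ctx.dpow_nonneg (C : Ctx P Δ) (hΔ : Δ ≠ 1) {c : ℤ} (hc : Δ ^ c ∈ P) : 0 ≤ c := by
  by_contra h
  push_neg at h
  have h1 : Δ ^ (-c) ∈ P := C.dpow_mem (by omega)
  have h2 : (Δ ^ c)⁻¹ ∈ P := by rwa [← zpow_neg]
  have h3 : Δ ^ c = 1 := C.unit _ hc h2
  have h4 : Δ ^ (-c) = 1 := by rw [zpow_neg, h3, inv_one]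
  have h5 : Δ ^ (-c - 1) ∈ P := C.dpow_mem (by omega)
  have h6 : Δ ^ (-c - 1) = Δ⁻¹ := by
    have e : Δ * Δ ^ (-c-1) = Δ ^ (-c) := by
      have e2 := zpow_add Δ 1 (-c-1)
      rw [zpow_one] at e2
      rw [← e2]; congr 1; ring
    rw [h4] at e
    exact (inv_eq_of_mul_eq_one_right e).symm
  rw [h6] at h5
  exact hΔ (C.unit Δ C.dmem h5)

theorem Ctx.dpow_le (C : Ctx P Δ) {a b : ℤ} (h : a ≤ b) : (Δ ^ a)⁻¹ * Δ ^ b ∈ P := by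
  rw [← zpow_neg, ← zpow_add]
  exact C.dpow_mem (by omega)

theorem Ctx.le_of_dpow (C : Ctx P Δ) (hΔ : Δ ≠ 1) {a b : ℤ} (h : (Δ ^ a)⁻¹ * Δ ^ b ∈ P) :
    a ≤ b := by
  rw [← zpow_neg, ← zpow_add] at h
  have := C.dpow_nonneg hΔ h
  omega

theorem sL_trans {x y z : G} (h1 : x⁻¹ * y ∈ P) (h2 : y⁻¹ * z ∈ P) : x⁻¹ * z ∈ P := by
  have : x⁻¹ * z = (x⁻¹ * y) * (y⁻¹ * z) := by group
  rw [this]; exact P.mul_mem h1 h2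

/-- every positive is below some power of Δ: prod of simples vs length -/
theorem Ctx.prod_simples_le (C : Ctx P Δ) (l : List G) (hl : ∀ x ∈ l, x ∈ simples P Δ) :
    (l.prod)⁻¹ * Δ ^ (l.length : ℤ) ∈ P := by
  induction l with
  | nil => simpa using P.one_mem
  | cons a t ih =>
    have ha := hl a (by simp)
    have ih' := ih (fun x hx => hl x (by simp [hx]))
    have key : ((a :: t).prod)⁻¹ * Δ ^ ((a :: t).length : ℤ) =
        ((t.prod)⁻¹ * Δ ^ (t.length : ℤ)) *
          (Δ ^ (-(t.length:ℤ)) * (a⁻¹ * Δ) * Δ ^ (-(-(t.length:ℤ)))) := by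
      simp only [List.prod_cons, List.length_cons]
      push_cast
      group
    rw [key]
    exact P.mul_mem ih' (C.zconj_mem (-(t.length:ℤ)) ha.2)

/-! ### shifts and G-level meets -/

theorem Ctx.shift_up (C : Ctx P Δ) {x : G} {a b : ℤ} (hab : a ≤ b) (h : Δ ^ a * x ∈ P) :
    Δ ^ b * x ∈ P := by
  have e : Δ ^ b * x = Δ ^ (b - a) * (Δ ^ a * x) := by
    rw [← mul_assoc, ← zpow_add]; congr 2; ring
  rw [e]; exact P.mul_mem (C.dpow_mem (by omega)) h

theorem Ctx.shift_upR (C : Ctx P Δ) {x : G} {a b : ℤ} (hab : a ≤ b) (h : x * Δ ^ a ∈ P) :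
    x * Δ ^ b ∈ P := by
  have e : x * Δ ^ b = (x * Δ ^ a) * Δ ^ (b - a) := by
    rw [mul_assoc, ← zpow_add]; congr 2; ring
  rw [e]; exact P.mul_mem h (C.dpow_mem (by omega))

theorem Ctx.exists_shift (C : Ctx P Δ) (x : G) : ∃ m : ℕ, Δ ^ (m : ℤ) * x ∈ P := by
  obtain ⟨a, ha, b, hb, rfl⟩ := C.frac x
  obtain ⟨l, hl, hprod⟩ := C.gen b hb
  refine ⟨l.length, ?_⟩
  have hble : b⁻¹ * Δ ^ (l.length : ℤ) ∈ P := by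
    rw [← hprod]; exact C.prod_simples_le l hl
  have e : Δ ^ (l.length : ℤ) * (a * b⁻¹) =
      Δ ^ (l.length : ℤ) * (a * (b⁻¹ * Δ ^ (l.length : ℤ))) * Δ ^ (-(l.length : ℤ)) := by
    group
  rw [e]
  exact C.zconj_mem _ (P.mul_mem ha hble)

theorem Ctx.exists_shiftR (C : Ctx P Δ) (x : G) : ∃ m : ℕ, x * Δ ^ (m : ℤ) ∈ P := by
  obtain ⟨m, hm⟩ := C.exists_shift x
  refine ⟨m, ?_⟩
  have e : x * Δ ^ (m:ℤ) = Δ ^ (-(m:ℤ)) * (Δ ^ (m:ℤ) * x) * Δ ^ (-(-(m:ℤ))) := by group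
  rw [e]; exact C.zconj_mem _ hm

theorem Ctx.meet_mul_left (C : Ctx P Δ) {c x y dd : G} (hc : c ∈ P) (hx : x ∈ P) (hy : y ∈ P)
    (hd : dd ∈ P) (huniv : ∀ e ∈ P, e⁻¹*x ∈ P → e⁻¹*y ∈ P → e⁻¹*dd ∈ P) :
    ∀ z ∈ P, z⁻¹*(c*x) ∈ P → z⁻¹*(c*y) ∈ P → z⁻¹*(c*dd) ∈ P := by
  intro z hz hzx hzy
  obtain ⟨j, hj, hzj, hcj, hjuniv⟩ := C.joinL z hz c hc
  have hjx : j⁻¹ * (c*x) ∈ P := hjuniv (c*x) (P.mul_mem hc hx) hzx (by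
    have : c⁻¹ * (c * x) = x := by group
    rw [this]; exact hx)
  have hjy : j⁻¹ * (c*y) ∈ P := hjuniv (c*y) (P.mul_mem hc hy) hzy (by
    have : c⁻¹ * (c * y) = y := by group
    rw [this]; exact hy)
  have hj'x : (c⁻¹*j)⁻¹ * x ∈ P := by
    have : (c⁻¹*j)⁻¹ * x = j⁻¹ * (c * x) := by group
    rw [this]; exact hjx
  have hj'y : (c⁻¹*j)⁻¹ * y ∈ P := by
    have : (c⁻¹*j)⁻¹ * y = j⁻¹ * (c * y) := by group
    rw [this]; exact hjy
  have hj'd : (c⁻¹*j)⁻¹ * dd ∈ P := huniv _ hcj hj'x hj'y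
  have e : z⁻¹*(c*dd) = (z⁻¹*j) * ((c⁻¹*j)⁻¹ * dd) := by group
  rw [e]; exact P.mul_mem hzj hj'd

theorem Ctx.meet_mul_right (C : Ctx P Δ) {c x y dd : G} (hc : c ∈ P) (hx : x ∈ P) (hy : y ∈ P)
    (hd : dd ∈ P) (huniv : ∀ e ∈ P, x*e⁻¹ ∈ P → y*e⁻¹ ∈ P → dd*e⁻¹ ∈ P) :
    ∀ z ∈ P, (x*c)*z⁻¹ ∈ P → (y*c)*z⁻¹ ∈ P → (dd*c)*z⁻¹ ∈ P := by
  intro z hz hzx hzy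
  obtain ⟨j, hj, hzj, hcj, hjuniv⟩ := C.joinR z hz c hc
  have hjx : (x*c) * j⁻¹ ∈ P := hjuniv (x*c) (P.mul_mem hx hc) hzx (by
    have : (x * c) * c⁻¹ = x := by group
    rw [this]; exact hx)
  have hjy : (y*c) * j⁻¹ ∈ P := hjuniv (y*c) (P.mul_mem hy hc) hzy (by
    have : (y * c) * c⁻¹ = y := by group
    rw [this]; exact hy)
  have hj'x : x * (j*c⁻¹)⁻¹ ∈ P := by
    have : x * (j*c⁻¹)⁻¹ = (x*c) * j⁻¹ := by group
    rw [this]; exact hjx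
  have hj'y : y * (j*c⁻¹)⁻¹ ∈ P := by
    have : y * (j*c⁻¹)⁻¹ = (y*c) * j⁻¹ := by group
    rw [this]; exact hjy
  have hj'd : dd * (j*c⁻¹)⁻¹ ∈ P := huniv _ hcj hj'x hj'y
  have e : (dd*c)*z⁻¹ = (dd * (j*c⁻¹)⁻¹) * (j * z⁻¹) := by group
  rw [e]; exact P.mul_mem hj'd hzj

theorem Ctx.gmeetL (C : Ctx P Δ) (x y : G) :
    ∃ d : G, d⁻¹*x ∈ P ∧ d⁻¹*y ∈ P ∧ ∀ z : G, z⁻¹*x ∈ P → z⁻¹*y ∈ P → z⁻¹*d ∈ P := by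
  obtain ⟨mx, hmx⟩ := C.exists_shift x
  obtain ⟨my, hmy⟩ := C.exists_shift y
  set m : ℤ := max (mx:ℤ) (my:ℤ) with hm
  have hx' : Δ ^ m * x ∈ P := C.shift_up (le_max_left _ _) hmx
  have hy' : Δ ^ m * y ∈ P := C.shift_up (le_max_right _ _) hmy
  obtain ⟨d₀, hd₀, hd₀x, hd₀y, hd₀u⟩ := C.meetL _ hx' _ hy'
  refine ⟨Δ ^ (-m) * d₀, ?_, ?_, ?_⟩
  · have e : (Δ ^ (-m) * d₀)⁻¹ * x = d₀⁻¹ * (Δ ^ m * x) := by group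
    rw [e]; exact hd₀x
  · have e : (Δ ^ (-m) * d₀)⁻¹ * y = d₀⁻¹ * (Δ ^ m * y) := by group
    rw [e]; exact hd₀y
  · intro z hzx hzy
    obtain ⟨mz, hmz⟩ := C.exists_shift z
    set N : ℤ := max m (mz:ℤ) with hN
    have hzN : Δ ^ N * z ∈ P := C.shift_up (le_max_right _ _) hmz
    have hc : Δ ^ (N - m) ∈ P := C.dpow_mem (by simp [hN])
    have h1 : (Δ ^ N * z)⁻¹ * (Δ ^ (N-m) * (Δ ^ m * x)) ∈ P := by
      have e : (Δ ^ N * z)⁻¹ * (Δ ^ (N-m) * (Δ ^ m * x)) = z⁻¹ * x := by group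
      rw [e]; exact hzx
    have h2 : (Δ ^ N * z)⁻¹ * (Δ ^ (N-m) * (Δ ^ m * y)) ∈ P := by
      have e : (Δ ^ N * z)⁻¹ * (Δ ^ (N-m) * (Δ ^ m * y)) = z⁻¹ * y := by group
      rw [e]; exact hzy
    have h3 := C.meet_mul_left hc hx' hy' hd₀ hd₀u (Δ ^ N * z) hzN h1 h2
    have e : z⁻¹ * (Δ ^ (-m) * d₀) = (Δ ^ N * z)⁻¹ * (Δ ^ (N-m) * d₀) := by group
    rw [e]; exact h3

theorem Ctx.gmeetR (C : Ctx P Δ) (x y : G) :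
    ∃ d : G, x*d⁻¹ ∈ P ∧ y*d⁻¹ ∈ P ∧ ∀ z : G, x*z⁻¹ ∈ P → y*z⁻¹ ∈ P → d*z⁻¹ ∈ P := by
  obtain ⟨mx, hmx⟩ := C.exists_shiftR x
  obtain ⟨my, hmy⟩ := C.exists_shiftR y
  set m : ℤ := max (mx:ℤ) (my:ℤ) with hm
  have hx' : x * Δ ^ m ∈ P := C.shift_upR (le_max_left _ _) hmx
  have hy' : y * Δ ^ m ∈ P := C.shift_upR (le_max_right _ _) hmy
  obtain ⟨d₀, hd₀, hd₀x, hd₀y, hd₀u⟩ := C.meetR _ hx' _ hy'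
  refine ⟨d₀ * Δ ^ (-m), ?_, ?_, ?_⟩
  · have e : x * (d₀ * Δ ^ (-m))⁻¹ = (x * Δ ^ m) * d₀⁻¹ := by group
    rw [e]; exact hd₀x
  · have e : y * (d₀ * Δ ^ (-m))⁻¹ = (y * Δ ^ m) * d₀⁻¹ := by group
    rw [e]; exact hd₀y
  · intro z hzx hzy
    obtain ⟨mz, hmz⟩ := C.exists_shiftR z
    set N : ℤ := max m (mz:ℤ) with hN
    have hzN : z * Δ ^ N ∈ P := C.shift_upR (le_max_right _ _) hmz
    have hc : Δ ^ (N - m) ∈ P := C.dpow_mem (by simp [hN])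
    have h1 : ((x * Δ ^ m) * Δ ^ (N-m)) * (z * Δ ^ N)⁻¹ ∈ P := by
      have e : ((x * Δ ^ m) * Δ ^ (N-m)) * (z * Δ ^ N)⁻¹ = x * z⁻¹ := by group
      rw [e]; exact hzx
    have h2 : ((y * Δ ^ m) * Δ ^ (N-m)) * (z * Δ ^ N)⁻¹ ∈ P := by
      have e : ((y * Δ ^ m) * Δ ^ (N-m)) * (z * Δ ^ N)⁻¹ = y * z⁻¹ := by group
      rw [e]; exact hzy
    have h3 := C.meet_mul_right hc hx' hy' hd₀ hd₀u (z * Δ ^ N) hzN h1 h2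
    have e : (d₀ * Δ ^ (-m)) * z⁻¹ = ((d₀ * Δ ^ (N-m))) * (z * Δ ^ N)⁻¹ := by group
    rw [e]; exact h3

theorem sR_trans {x y z : G} (h1 : x * y⁻¹ ∈ P) (h2 : y * z⁻¹ ∈ P) : x * z⁻¹ ∈ P := by
  have : x * z⁻¹ = (x * y⁻¹) * (y * z⁻¹) := by group
  rw [this]; exact P.mul_mem h1 h2

theorem Ctx.gmeetL_fam (C : Ctx P Δ) (f : ℕ → G) (n : ℕ) :
    ∃ d : G, (∀ i ≤ n, d⁻¹ * f i ∈ P) ∧ ∀ z : G, (∀ i ≤ n, z⁻¹ * f i ∈ P) → z⁻¹ * d ∈ P := by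
  induction n with
  | zero =>
    refine ⟨f 0, fun i hi => ?_, fun z hz => hz 0 le_rfl⟩
    interval_cases i
    simpa using P.one_mem
  | succ n ih =>
    obtain ⟨e, he1, he2⟩ := ih
    obtain ⟨d, hd1, hd2, hd3⟩ := C.gmeetL e (f (n+1))
    refine ⟨d, fun i hi => ?_, fun z hz => ?_⟩
    · rcases Nat.lt_or_ge i (n+1) with h | h
      · exact sL_trans hd1 (he1 i (by omega))
      · have : i = n + 1 := by omega
        rw [this]; exact hd2
    · exact hd3 z (he2 z (fun i hi => hz i (by omega))) (hz (n+1) le_rfl)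

theorem Ctx.gmeetR_fam (C : Ctx P Δ) (f : ℕ → G) (n : ℕ) :
    ∃ d : G, (∀ i ≤ n, f i * d⁻¹ ∈ P) ∧ ∀ z : G, (∀ i ≤ n, f i * z⁻¹ ∈ P) → d * z⁻¹ ∈ P := by
  induction n with
  | zero =>
    refine ⟨f 0, fun i hi => ?_, fun z hz => hz 0 le_rfl⟩
    interval_cases i
    simpa using P.one_mem
  | succ n ih =>
    obtain ⟨e, he1, he2⟩ := ih
    obtain ⟨d, hd1, hd2, hd3⟩ := C.gmeetR e (f (n+1))
    refine ⟨d, fun i hi => ?_, fun z hz => ?_⟩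
    · rcases Nat.lt_or_ge i (n+1) with h | h
      · exact sR_trans (he1 i (by omega)) hd1
      · have : i = n + 1 := by omega
        rw [this]; exact hd2
    · exact hd3 z (he2 z (fun i hi => hz i (by omega))) (hz (n+1) le_rfl)

/-! ### core conjugacy claims -/

theorem Ctx.core_inf (C : Ctx P Δ) (g : G) (u : ℤ) (n : ℕ) (hn : 1 ≤ n)
    (hyp : (Δ ^ ((n:ℤ) * u))⁻¹ * g ^ n ∈ P) :
    ∃ x : G, (Δ ^ u)⁻¹ * (x * g * x⁻¹) ∈ P := by
  set h : ℕ → G := fun i => Δ ^ (-(i:ℤ) * u) * g ^ i with hdef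
  obtain ⟨d, hd1, hd2⟩ := C.gmeetR_fam h (n-1)
  have hinv : d⁻¹ ∈ P := by
    have h0 := hd1 0 (by omega)
    have e : h 0 * d⁻¹ = d⁻¹ := by simp [hdef]
    rwa [e] at h0
  have hhn : h n ∈ P := by
    have e : h n = (Δ ^ ((n:ℤ)*u))⁻¹ * g ^ n := by
      simp only [hdef, ← zpow_neg]
      congr 2
      ring
    rw [e]; exact hyp
  have hlb : ∀ i, 1 ≤ i → i ≤ n → h i * d⁻¹ ∈ P := by
    intro i h1 h2
    rcases Nat.lt_or_ge i n with h' | h'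
    · exact hd1 i (by omega)
    · have : i = n := by omega
      rw [this]; exact P.mul_mem hhn hinv
  have key : ∀ i : ℕ, Δ ^ (-u) * (h i * g) = h (i+1) := by
    intro i
    simp only [hdef]
    push_cast
    have e1 : (-((i:ℤ)+1) * u) = (-u) + (-(i:ℤ)*u) := by ring
    rw [e1, zpow_add, pow_succ]
    group
  have trans_univ : ∀ z : G, (∀ i, 1 ≤ i → i ≤ n → h i * z⁻¹ ∈ P) →
      (Δ ^ (-u) * (d * g)) * z⁻¹ ∈ P := by
    intro z hz
    have hstep : ∀ i ≤ n-1, h i * (Δ ^ u * z * g⁻¹)⁻¹ ∈ P := by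
      intro i hi
      have e : h i * (Δ ^ u * z * g⁻¹)⁻¹ = Δ ^ u * (h (i+1) * z⁻¹) * Δ ^ (-u) := by
        rw [← key i]; group
      rw [e]; exact C.zconj_mem u (hz (i+1) (by omega) (by omega))
    have hc := hd2 _ hstep
    have e : (Δ ^ (-u) * (d * g)) * z⁻¹ =
        Δ ^ (-u) * (d * (Δ ^ u * z * g⁻¹)⁻¹) * Δ ^ (-(-u)) := by group
    rw [e]; exact C.zconj_mem (-u) hc
  have final := trans_univ d hlb
  refine ⟨d, ?_⟩
  have e : (Δ ^ u)⁻¹ * (d * g * d⁻¹) = (Δ ^ (-u) * (d * g)) * d⁻¹ := by group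
  rw [e]; exact final

theorem Ctx.core_sup (C : Ctx P Δ) (g : G) (v : ℤ) (n : ℕ) (hn : 1 ≤ n)
    (hyp : (g ^ n)⁻¹ * Δ ^ ((n:ℤ) * v) ∈ P) :
    ∃ x : G, (x * g * x⁻¹)⁻¹ * Δ ^ v ∈ P := by
  set k : ℕ → G := fun i => (g ^ i)⁻¹ * Δ ^ ((i:ℤ) * v) with kdef
  obtain ⟨e, he1, he2⟩ := C.gmeetL_fam k (n-1)
  have heinv : e⁻¹ ∈ P := by
    have h0 := he1 0 (by omega)
    have e0 : e⁻¹ * k 0 = e⁻¹ := by simp [kdef]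
    rwa [e0] at h0
  have hkn : k n ∈ P := by
    have e0 : k n = (g ^ n)⁻¹ * Δ ^ ((n:ℤ) * v) := by simp only [kdef]
    rw [e0]; exact hyp
  have hlb : ∀ i, 1 ≤ i → i ≤ n → e⁻¹ * k i ∈ P := by
    intro i h1 h2
    rcases Nat.lt_or_ge i n with h' | h'
    · exact he1 i (by omega)
    · have : i = n := by omega
      rw [this]; exact P.mul_mem heinv hkn
  have key : ∀ i : ℕ, g⁻¹ * k i * Δ ^ v = k (i+1) := by
    intro i
    simp only [kdef]
    push_cast
    have e1 : (((i:ℤ)+1) * v) = ((i:ℤ)*v) + v := by ring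
    rw [e1, zpow_add, pow_succ]
    group
  have trans_univ : ∀ z : G, (∀ i, 1 ≤ i → i ≤ n → z⁻¹ * k i ∈ P) →
      z⁻¹ * (g⁻¹ * e * Δ ^ v) ∈ P := by
    intro z hz
    have hstep : ∀ i ≤ n-1, (g * z * Δ ^ (-v))⁻¹ * k i ∈ P := by
      intro i hi
      have e' : (g * z * Δ ^ (-v))⁻¹ * k i = Δ ^ v * (z⁻¹ * k (i+1)) * Δ ^ (-v) := by
        rw [← key i]; group
      rw [e']; exact C.zconj_mem v (hz (i+1) (by omega) (by omega))
    have hc := he2 _ hstep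
    have e' : z⁻¹ * (g⁻¹ * e * Δ ^ v) =
        Δ ^ (-v) * ((g * z * Δ ^ (-v))⁻¹ * e) * Δ ^ (-(-v)) := by group
    rw [e']; exact C.zconj_mem (-v) hc
  have final := trans_univ e hlb
  refine ⟨e⁻¹, ?_⟩
  have e' : (e⁻¹ * g * e⁻¹⁻¹)⁻¹ * Δ ^ v = e⁻¹ * (g⁻¹ * e * Δ ^ v) := by group
  rw [e']; exact final

/-! ### decomposition of bounded positive elements into simples -/

theorem Ctx.decompose (C : Ctx P Δ) : ∀ (k : ℕ) (p : G), p ∈ P → p⁻¹ * Δ ^ (k:ℤ) ∈ P →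
    ∃ l : List G, (∀ x ∈ l, x ∈ simples P Δ) ∧ l.length = k ∧ l.prod = p := by
  intro k
  induction k with
  | zero =>
    intro p hp hle
    have hp1 : p = 1 := C.unit p hp (by simpa using hle)
    exact ⟨[], by simp, by simp, by simp [hp1]⟩
  | succ k ih =>
    intro p hp hle
    obtain ⟨a, hax, haΔ, hauniv⟩ := C.gmeetL p Δ
    have haP : a ∈ P := by
      have := hauniv 1 (by simpa using hp) (by simpa using C.dmem)
      simpa using this
    have hp' : a⁻¹ * p ∈ P := hax
    have h1 : (p * Δ ^ (-(k:ℤ)))⁻¹ * p ∈ P := by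
      have e : (p * Δ ^ (-(k:ℤ)))⁻¹ * p = Δ ^ (k:ℤ) := by group
      rw [e]; exact C.dpow_mem (by omega)
    have h2 : (p * Δ ^ (-(k:ℤ)))⁻¹ * Δ ∈ P := by
      have hle' : p⁻¹ * Δ ^ ((k:ℤ)+1) ∈ P := by
        have e : ((k:ℕ)+1 : ℤ) = (k:ℤ)+1 := by push_cast; ring
        rwa [← e]
        
      have e : (p * Δ ^ (-(k:ℤ)))⁻¹ * Δ =
          Δ ^ (k:ℤ) * (p⁻¹ * Δ ^ ((k:ℤ)+1)) * Δ ^ (-(k:ℤ)) := by group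
      rw [e]; exact C.zconj_mem (k:ℤ) hle'
    have h3 : (p * Δ ^ (-(k:ℤ)))⁻¹ * a ∈ P := hauniv _ h1 h2
    have hp'le : (a⁻¹ * p)⁻¹ * Δ ^ (k:ℤ) ∈ P := by
      have e : (a⁻¹ * p)⁻¹ * Δ ^ (k:ℤ) =
          Δ ^ (-(k:ℤ)) * ((p * Δ ^ (-(k:ℤ)))⁻¹ * a) * Δ ^ (-(-(k:ℤ))) := by group
      rw [e]; exact C.zconj_mem (-(k:ℤ)) h3
    obtain ⟨l', hl1, hl2, hl3⟩ := ih (a⁻¹ * p) hp' hp'le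
    refine ⟨a :: l', ?_, by simp [hl2], ?_⟩
    · intro x hx
      rcases List.mem_cons.mp hx with h | h
      · rw [h]; exact ⟨haP, haΔ⟩
      · exact hl1 x h
    · simp [List.prod_cons, hl3]

/-! ### word bounds -/

theorem Ctx.word_bounds (C : Ctx P Δ) : ∀ (L : List G),
    (∀ x ∈ L, x ∈ simples P Δ ∪ (simples P Δ)⁻¹) →
    ∃ p q : ℕ, p + q = L.length ∧ Δ ^ (q:ℤ) * L.prod ∈ P ∧ (L.prod)⁻¹ * Δ ^ (p:ℤ) ∈ P := by
  intro L hL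
  induction L with
  | nil => exact ⟨0, 0, by simp, by simpa using P.one_mem, by simpa using P.one_mem⟩
  | cons x t ih =>
    obtain ⟨p, q, hpq, hq, hp⟩ := ih (fun y hy => hL y (by simp [hy]))
    rcases hL x (by simp) with hxs | hxs
    · refine ⟨p+1, q, by simp [← hpq]; omega, ?_, ?_⟩
      · have e : Δ ^ (q:ℤ) * (x :: t).prod =
            (Δ ^ (q:ℤ) * x * Δ ^ (-(q:ℤ))) * (Δ ^ (q:ℤ) * t.prod) := by
          simp only [List.prod_cons]; group
        rw [e]; exact P.mul_mem (C.zconj_mem (q:ℤ) hxs.1) hq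
      · have e : ((x :: t).prod)⁻¹ * Δ ^ ((p+1:ℕ):ℤ) =
            ((t.prod)⁻¹ * Δ ^ (p:ℤ)) * (Δ ^ (-(p:ℤ)) * (x⁻¹ * Δ) * Δ ^ (-(-(p:ℤ)))) := by
          simp only [List.prod_cons]; push_cast; group
        rw [e]; exact P.mul_mem hp (C.zconj_mem (-(p:ℤ)) hxs.2)
    · have hy : x⁻¹ ∈ simples P Δ := Set.mem_inv.mp hxs
      refine ⟨p, q+1, by simp [← hpq]; omega, ?_, ?_⟩
      · have hw' := C.zconj_simple (q:ℤ) hy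
        have hDw : Δ * (Δ ^ (q:ℤ) * x⁻¹ * Δ ^ (-(q:ℤ)))⁻¹ ∈ P :=
          (C.lr _ hw'.1).1 hw'.2
        have e : Δ ^ ((q+1:ℕ):ℤ) * (x :: t).prod =
            (Δ * (Δ ^ (q:ℤ) * x⁻¹ * Δ ^ (-(q:ℤ)))⁻¹) * (Δ ^ (q:ℤ) * t.prod) := by
          simp only [List.prod_cons]; push_cast; group
        rw [e]; exact P.mul_mem hDw hq
      · have e : ((x :: t).prod)⁻¹ * Δ ^ (p:ℤ) =
            ((t.prod)⁻¹ * Δ ^ (p:ℤ)) * (Δ ^ (-(p:ℤ)) * x⁻¹ * Δ ^ (-(-(p:ℤ)))) := by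
          simp only [List.prod_cons]; group
        rw [e]; exact P.mul_mem hp (C.zconj_mem (-(p:ℤ)) hy.1)

/-! ### words for negative shifts -/

theorem Ctx.neg_word (C : Ctx P Δ) : ∀ (m : ℕ) (ws : List G),
    (∀ x ∈ ws, x ∈ simples P Δ) →
    ∃ L : List G, (∀ x ∈ L, x ∈ simples P Δ ∪ (simples P Δ)⁻¹) ∧
      L.length = max m ws.length ∧ L.prod = Δ ^ (-(m:ℤ)) * ws.prod := by
  intro m
  induction m with
  | zero =>
    intro ws hws
    exact ⟨ws, fun x hx => Or.inl (hws x hx), by simp, by simp⟩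
  | succ m ih =>
    intro ws hws
    cases ws with
    | nil =>
      refine ⟨List.replicate (m+1) Δ⁻¹, ?_, by simp, ?_⟩
      · intro x hx
        rw [List.eq_of_mem_replicate hx]
        exact Or.inr (Set.mem_inv.mpr (by simpa using C.delta_simple))
      · simp only [List.prod_replicate, List.prod_nil, mul_one]
        rw [inv_pow, ← zpow_natCast, ← zpow_neg]
    | cons w ws' =>
      obtain ⟨L', hL1, hL2, hL3⟩ := ih ws' (fun x hx => hws x (by simp [hx]))
      have hw : w ∈ simples P Δ := hws w (by simp)
      have hw' := C.zconj_simple (-(m:ℤ)) hw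
      set w' : G := Δ ^ (-(m:ℤ)) * w * Δ ^ (-(-(m:ℤ))) with hw'def
      have hy : (Δ⁻¹ * w') ∈ (simples P Δ)⁻¹ := by
        apply Set.mem_inv.mpr
        have e : (Δ⁻¹ * w')⁻¹ = w'⁻¹ * Δ := by group
        rw [e]
        exact C.simple_compl hw'
      refine ⟨(Δ⁻¹ * w') :: L', ?_, ?_, ?_⟩
      · intro x hx
        rcases List.mem_cons.mp hx with h | h
        · rw [h]; exact Or.inr hy
        · exact hL1 x h
      · simp only [List.length_cons, hL2]
        omega
      · simp only [List.prod_cons, hL3, hw'def, List.prod_cons]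
        push_cast
        group

/-! ### inf and sup -/

theorem Ctx.exists_inf (C : Ctx P Δ) (hΔ : Δ ≠ 1) (x : G) :
    ∃ r : ℤ, ((Δ ^ r)⁻¹ * x ∈ P) ∧ ∀ t : ℤ, (Δ ^ t)⁻¹ * x ∈ P → t ≤ r := by
  obtain ⟨m, hm⟩ := C.exists_shift x
  obtain ⟨m', hm'⟩ := C.exists_shiftR x⁻¹
  have hne : (Δ ^ (-(m:ℤ)))⁻¹ * x ∈ P := by
    rw [zpow_neg, inv_inv]; exact hm
  have hbdd : ∀ t : ℤ, (Δ ^ t)⁻¹ * x ∈ P → t ≤ (m' : ℤ) := by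
    intro t ht
    exact C.le_of_dpow hΔ (sL_trans ht hm')
  obtain ⟨r, hr1, hr2⟩ := Int.exists_greatest_of_bdd ⟨(m':ℤ), hbdd⟩ ⟨-(m:ℤ), hne⟩
  exact ⟨r, hr1, hr2⟩

theorem Ctx.exists_sup (C : Ctx P Δ) (hΔ : Δ ≠ 1) (x : G) :
    ∃ s : ℤ, (x⁻¹ * Δ ^ s ∈ P) ∧ ∀ t : ℤ, x⁻¹ * Δ ^ t ∈ P → s ≤ t := by
  obtain ⟨m, hm⟩ := C.exists_shift x
  obtain ⟨m', hm'⟩ := C.exists_shiftR x⁻¹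
  have hne0 : (Δ ^ (-(m:ℤ)))⁻¹ * x ∈ P := by
    rw [zpow_neg, inv_inv]; exact hm
  have hbdd : ∀ t : ℤ, x⁻¹ * Δ ^ t ∈ P → -(m:ℤ) ≤ t := by
    intro t ht
    exact C.le_of_dpow hΔ (sL_trans hne0 ht)
  obtain ⟨s, hs1, hs2⟩ := Int.exists_least_of_bdd ⟨-(m:ℤ), hbdd⟩ ⟨(m':ℤ), hm'⟩
  exact ⟨s, hs1, hs2⟩

/-! ### translation -/

theorem atomic_unit {M : Type*} [Monoid M] (h : Atomic M) {u v : M} (huv : u * v = 1) :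
    u = 1 := by
  obtain ⟨hex, hbd⟩ := h
  by_contra hne
  obtain ⟨lu, hlu, hpu⟩ := hex u
  obtain ⟨lv, hlv, hpv⟩ := hex v
  obtain ⟨N, hN⟩ := hbd 1
  have hlu_ne : lu ≠ [] := by
    rintro rfl
    have : u = 1 := by simpa using hpu.symm
    exact hne this
  set L := (List.replicate (N+1) (lu ++ lv)).flatten with hL
  have hatoms : ∀ x ∈ L, IsAtomElt x := by
    intro x hx
    rw [hL, List.mem_flatten] at hx
    obtain ⟨t, ht, hxt⟩ := hx
    rw [List.eq_of_mem_replicate ht] at hxt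
    rcases List.mem_append.mp hxt with h | h
    · exact hlu x h
    · exact hlv x h
  have hprod : L.prod = 1 := by
    rw [hL]
    have : ∀ k : ℕ, ((List.replicate k (lu ++ lv)).flatten).prod = 1 := by
      intro k
      induction k with
      | zero => simp
      | succ k ih =>
        rw [List.replicate_succ, List.flatten_cons, List.prod_append, ih, mul_one,
          List.prod_append, hpu, hpv, huv]
    exact this (N+1)
  have hlen : N + 1 ≤ L.length := by
    have : ∀ k : ℕ, ((List.replicate k (lu ++ lv)).flatten).length = k * (lu ++ lv).length := by
      intro k
      induction k with
      | zero => simp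
      | succ k ih => rw [List.replicate_succ, List.flatten_cons, List.length_append, ih]; ring
    rw [hL, this]
    have : 1 ≤ (lu ++ lv).length := by
      rw [List.length_append]
      have := List.length_pos_iff.mpr hlu_ne
      omega
    calc N + 1 ≤ (N+1) * 1 := by omega
    _ ≤ (N+1) * (lu ++ lv).length := by exact Nat.mul_le_mul_left _ this
  have := hN L hatoms hprod
  omega

theorem mkCtx {P : Submonoid G} {Δ : G} (hG : IsGarsideGroup P Δ) : Ctx P Δ := by
  obtain ⟨hM, hfrac, hΔmem, hGar⟩ := hG
  obtain ⟨-, -, -, hatomic, hglbL, hlubL, hglbR, hlubR, -⟩ := hM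
  have dvdL_iff : ∀ (u v : P), dvdL u v ↔ (u : G)⁻¹ * (v:G) ∈ P := by
    intro u v
    constructor
    · rintro ⟨c, hc⟩
      have : (u:G) * (c:G) = v := by exact_mod_cast congrArg Subtype.val hc
      rw [← this]
      simpa using c.2
    · intro h
      exact ⟨⟨(u:G)⁻¹ * v, h⟩, Subtype.ext (by simp)⟩
  have dvdR_iff : ∀ (u v : P), dvdR u v ↔ (v : G) * (u:G)⁻¹ ∈ P := by
    intro u v
    constructor
    · rintro ⟨c, hc⟩
      have : (c:G) * (u:G) = v := by exact_mod_cast congrArg Subtype.val hc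
      rw [← this]
      simpa using c.2
    · intro h
      exact ⟨⟨(v:G) * (u:G)⁻¹, h⟩, Subtype.ext (by simp)⟩
  refine ⟨hΔmem, ?_, ?_, ?_, ?_, ?_, ?_, ?_, ?_⟩
  · -- frac
    intro g
    obtain ⟨a, b, hab⟩ := hfrac g
    exact ⟨a, a.2, b, b.2, hab⟩
  · -- unit
    intro x hx hinv
    have h1 : (⟨x, hx⟩ : P) * ⟨x⁻¹, hinv⟩ = 1 := Subtype.ext (by simp)
    have := atomic_unit hatomic h1
    exact congrArg Subtype.val this
  · -- gen
    intro p hp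
    have hmem : (⟨p, hp⟩ : P) ∈ Submonoid.closure (Lset (⟨Δ, hΔmem⟩ : P)) := by
      rw [hGar.2]; trivial
    obtain ⟨lsub, hlsub, hprod⟩ := Submonoid.exists_list_of_mem_closure hmem
    refine ⟨lsub.map (Subtype.val), ?_, ?_⟩
    · intro x hx
      rw [List.mem_map] at hx
      obtain ⟨y, hy, rfl⟩ := hx
      have := hlsub y hy
      rw [show (Lset (⟨Δ, hΔmem⟩ : P)) = {z : P | dvdL z ⟨Δ, hΔmem⟩} from rfl] at this
      have h2 := (dvdL_iff y ⟨Δ, hΔmem⟩).mp this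
      exact ⟨y.2, h2⟩
    · have := congrArg (Subtype.val) hprod
      simpa using this
  · -- lr
    intro x hx
    have hLR := hGar.1
    constructor
    · intro h
      have h1 : (⟨x, hx⟩ : P) ∈ Lset (⟨Δ, hΔmem⟩ : P) :=
        (dvdL_iff ⟨x, hx⟩ ⟨Δ, hΔmem⟩).mpr h
      rw [hLR] at h1
      exact (dvdR_iff ⟨x, hx⟩ ⟨Δ, hΔmem⟩).mp h1
    · intro h
      have h1 : (⟨x, hx⟩ : P) ∈ Rset (⟨Δ, hΔmem⟩ : P) :=
        (dvdR_iff ⟨x, hx⟩ ⟨Δ, hΔmem⟩).mpr h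
      rw [← hLR] at h1
      exact (dvdL_iff ⟨x, hx⟩ ⟨Δ, hΔmem⟩).mp h1
  · -- meetL
    intro a ha b hb
    obtain ⟨d, hd1, hd2, hd3⟩ := hglbL ⟨a, ha⟩ ⟨b, hb⟩
    refine ⟨(d:G), d.2, (dvdL_iff d ⟨a, ha⟩).mp hd1, (dvdL_iff d ⟨b, hb⟩).mp hd2, ?_⟩
    intro c hc hca hcb
    exact (dvdL_iff ⟨c, hc⟩ d).mp (hd3 ⟨c, hc⟩ ((dvdL_iff ⟨c,hc⟩ ⟨a,ha⟩).mpr hca)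
      ((dvdL_iff ⟨c,hc⟩ ⟨b,hb⟩).mpr hcb))
  · -- joinL
    intro a ha b hb
    obtain ⟨d, hd1, hd2, hd3⟩ := hlubL ⟨a, ha⟩ ⟨b, hb⟩
    refine ⟨(d:G), d.2, (dvdL_iff ⟨a, ha⟩ d).mp hd1, (dvdL_iff ⟨b, hb⟩ d).mp hd2, ?_⟩
    intro c hc hca hcb
    exact (dvdL_iff d ⟨c, hc⟩).mp (hd3 ⟨c, hc⟩ ((dvdL_iff ⟨a,ha⟩ ⟨c,hc⟩).mpr hca)
      ((dvdL_iff ⟨b,hb⟩ ⟨c,hc⟩).mpr hcb))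
  · -- meetR
    intro a ha b hb
    obtain ⟨d, hd1, hd2, hd3⟩ := hglbR ⟨a, ha⟩ ⟨b, hb⟩
    refine ⟨(d:G), d.2, (dvdR_iff d ⟨a, ha⟩).mp hd1, (dvdR_iff d ⟨b, hb⟩).mp hd2, ?_⟩
    intro c hc hca hcb
    exact (dvdR_iff ⟨c, hc⟩ d).mp (hd3 ⟨c, hc⟩ ((dvdR_iff ⟨c,hc⟩ ⟨a,ha⟩).mpr hca)
      ((dvdR_iff ⟨c,hc⟩ ⟨b,hb⟩).mpr hcb))
  · -- joinR
    intro a ha b hb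
    obtain ⟨d, hd1, hd2, hd3⟩ := hlubR ⟨a, ha⟩ ⟨b, hb⟩
    refine ⟨(d:G), d.2, (dvdR_iff ⟨a, ha⟩ d).mp hd1, (dvdR_iff ⟨b, hb⟩ d).mp hd2, ?_⟩
    intro c hc hca hcb
    exact (dvdR_iff d ⟨c, hc⟩).mp (hd3 ⟨c, hc⟩ ((dvdR_iff ⟨a,ha⟩ ⟨c,hc⟩).mpr hca)
      ((dvdR_iff ⟨b,hb⟩ ⟨c,hc⟩).mpr hcb))

theorem flat_len {α : Type*} (Lg : List α) (k : ℕ) :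
    ((List.replicate k Lg).flatten).length = k * Lg.length := by
  induction k with
  | zero => simp
  | succ k ih => rw [List.replicate_succ, List.flatten_cons, List.length_append, ih]; ring

theorem flat_prod (Lg : List G) (k : ℕ) :
    ((List.replicate k Lg).flatten).prod = Lg.prod ^ k := by
  induction k with
  | zero => simp
  | succ k ih =>
    rw [List.replicate_succ, List.flatten_cons, List.prod_append, ih]
    rw [← pow_succ']

end Gar


/-- **Theorem 7.1.** If `g ∈ G` is contained in its super summit set, then for any
`n ≥ 1`, `|g|_𝒟 - 2 < |gⁿ|_𝒟 / n ≤ |g|_𝒟`. -/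
theorem geodesic_length_pow {G : Type*} [Group G] (P : Submonoid G) (Δ : G)
    (hG : IsGarsideGroup P Δ) (g : G)
    (hss : ∀ h : G, IsConj g h → ∀ t : ℤ,
      (gdvdL P (Δ ^ t) h → gdvdL P (Δ ^ t) g) ∧
      (gdvdL P h (Δ ^ t) → gdvdL P g (Δ ^ t)))
    (n : ℕ) (hn : 1 ≤ n) (l ln : ℕ)
    (hl : IsLeast (wlenSet (simples P Δ) g) l)
    (hln : IsLeast (wlenSet (simples P Δ) (g ^ n)) ln) :
    (n : ℤ) * ((l : ℤ) - 2) < (ln : ℤ) ∧ (ln : ℤ) ≤ (n : ℤ) * (l : ℤ) := by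
  have C := Gar.mkCtx hG
  have hn' : (1:ℤ) ≤ (n:ℤ) := by exact_mod_cast hn
  by_cases hΔ1 : Δ = 1
  · -- degenerate case : the group is trivial
    have hP1 : ∀ p ∈ P, p = 1 := by
      intro p hp
      obtain ⟨lst, hlst, rfl⟩ := C.gen p hp
      apply List.prod_eq_one
      intro x hx
      have hs := hlst x hx
      have hxinv : x⁻¹ ∈ P := by
        have h2 := hs.2
        rwa [hΔ1, mul_one] at h2
      exact C.unit x hs.1 hxinv
    have hg1 : g = 1 := by
      obtain ⟨a, ha, b, hb, rfl⟩ := C.frac g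
      rw [hP1 a ha, hP1 b hb]; simp
    have hl0 : l = 0 := by
      have h0 : 0 ∈ wlenSet (simples P Δ) g := ⟨[], by simp, by simp, by simp [hg1]⟩
      have := hl.2 h0
      omega
    have hln0 : ln = 0 := by
      have h0 : 0 ∈ wlenSet (simples P Δ) (g^n) := ⟨[], by simp, by simp, by simp [hg1]⟩
      have := hln.2 h0
      omega
    rw [hl0, hln0]
    constructor
    · push_cast
      nlinarith
    · push_cast
      nlinarith
  · -- main case
    obtain ⟨r, hr1, hr2⟩ := C.exists_inf hΔ1 g
    obtain ⟨s, hs1, hs2⟩ := C.exists_sup hΔ1 g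
    obtain ⟨rn, hrn1, hrn2⟩ := C.exists_inf hΔ1 (g^n)
    obtain ⟨sn, hsn1, hsn2⟩ := C.exists_sup hΔ1 (g^n)
    have hrs : r ≤ s := C.le_of_dpow hΔ1 (Gar.sL_trans hr1 hs1)
    -- Lee-type bounds using the super summit hypothesis
    have hLee1 : rn ≤ (n:ℤ)*r + n - 1 := by
      by_contra hcon
      push_neg at hcon
      have e : (n:ℤ)*(r+1) = (n:ℤ)*r + n := by ring
      have hle : (n:ℤ)*(r+1) ≤ rn := by linarith
      have h1 : (Δ ^ ((n:ℤ)*(r+1)))⁻¹ * g^n ∈ P :=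
        Gar.sL_trans (C.dpow_le hle) hrn1
      obtain ⟨x, hx⟩ := C.core_inf g (r+1) n hn h1
      have hconj : IsConj g (x*g*x⁻¹) := isConj_iff.mpr ⟨x, rfl⟩
      have h2 := (hss _ hconj (r+1)).1 hx
      have := hr2 (r+1) h2
      omega
    have hLee2 : (n:ℤ)*s - n + 1 ≤ sn := by
      by_contra hcon
      push_neg at hcon
      have e : (n:ℤ)*(s-1) = (n:ℤ)*s - n := by ring
      have hle : sn ≤ (n:ℤ)*(s-1) := by linarith
      have h1 : (g^n)⁻¹ * Δ ^ ((n:ℤ)*(s-1)) ∈ P := Gar.sL_trans hsn1 (C.dpow_le hle)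
      obtain ⟨x, hx⟩ := C.core_sup g (s-1) n hn h1
      have hconj : IsConj g (x*g*x⁻¹) := isConj_iff.mpr ⟨x, rfl⟩
      have h2 := (hss _ hconj (s-1)).2 hx
      have := hs2 (s-1) h2
      omega
    -- upper bound : ln ≤ n * l
    obtain ⟨Lg, hLgmem, hLglen, hLgprod⟩ := hl.1
    have hupmem : (n * l) ∈ wlenSet (simples P Δ) (g^n) := by
      refine ⟨(List.replicate n Lg).flatten, ?_, ?_, ?_⟩
      · intro x hx
        rw [List.mem_flatten] at hx
        obtain ⟨t, ht, hxt⟩ := hx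
        rw [List.eq_of_mem_replicate ht] at hxt
        exact hLgmem x hxt
      · rw [Gar.flat_len, hLglen]
      · rw [Gar.flat_prod, hLgprod]
    have hup : ln ≤ n * l := hln.2 hupmem
    have hup' : (ln:ℤ) ≤ (n:ℤ)*(l:ℤ) := by exact_mod_cast hup
    -- lower bound data from a minimal word for g^n
    obtain ⟨Ln, hLnmem, hLnlen, hLnprod⟩ := hln.1
    obtain ⟨p, q, hpq, hq, hp⟩ := C.word_bounds Ln hLnmem
    rw [hLnprod] at hq hp
    have h_rn : -(q:ℤ) ≤ rn := hrn2 _ (by rw [zpow_neg, inv_inv]; exact hq)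
    have h_sn : sn ≤ (p:ℤ) := hsn2 _ hp
    have hln_eq : (p:ℤ) + (q:ℤ) = (ln:ℤ) := by
      rw [hLnlen] at hpq
      exact_mod_cast hpq
    have hq0 : (0:ℤ) ≤ (q:ℤ) := by positivity
    have hp0 : (0:ℤ) ≤ (p:ℤ) := by positivity
    -- decomposition of g into Δ^r times (s-r) simples
    have hpgP : (Δ^r)⁻¹ * g ∈ P := hr1
    have hpgle : ((Δ^r)⁻¹ * g)⁻¹ * Δ^(((s-r).toNat : ℕ):ℤ) ∈ P := by
      have e1 : (((s-r).toNat:ℕ):ℤ) = s - r := by omega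
      rw [e1]
      have e : ((Δ^r)⁻¹ * g)⁻¹ * Δ^(s-r) = g⁻¹ * (Δ^r * Δ^(s-r)) := by group
      rw [e, ← zpow_add]
      have e2 : r + (s-r) = s := by ring
      rw [e2]; exact hs1
    obtain ⟨ws, hws, hwslen, hwsprod⟩ := C.decompose (s-r).toNat _ hpgP hpgle
    rcases le_or_gt 0 r with hr0 | hr0
    · -- case r ≥ 0 : l ≤ s
      have hword : (r.toNat + (s-r).toNat) ∈ wlenSet (simples P Δ) g := by
        refine ⟨List.replicate r.toNat Δ ++ ws, ?_, ?_, ?_⟩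
        · intro x hx
          rcases List.mem_append.mp hx with h | h
          · rw [List.eq_of_mem_replicate h]; exact Or.inl C.delta_simple
          · exact Or.inl (hws x h)
        · simp [hwslen]
        · rw [List.prod_append, List.prod_replicate, hwsprod]
          have e : Δ ^ (r.toNat) = Δ ^ r := by
            rw [← zpow_natCast]; congr 1; omega
          rw [e]; group
      have hlle := hl.2 hword
      have hlle' : (l:ℤ) ≤ s := by
        have e : ((r.toNat + (s-r).toNat : ℕ):ℤ) = s := by push_cast; omega
        have : (l:ℤ) ≤ ((r.toNat + (s-r).toNat : ℕ):ℤ) := by exact_mod_cast hlle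
        omega
      have hmul : (n:ℤ)*((l:ℤ)-2) ≤ (n:ℤ)*(s-2) :=
        mul_le_mul_of_nonneg_left (by linarith) (by linarith)
      have e : (n:ℤ)*(s-2) = (n:ℤ)*s - 2*n := by ring
      exact ⟨by linarith, hup'⟩
    · -- case r < 0
      obtain ⟨Lw, hLw1, hLw2, hLw3⟩ := C.neg_word (-r).toNat ws hws
      have hword : (max (-r).toNat (s-r).toNat) ∈ wlenSet (simples P Δ) g := by
        refine ⟨Lw, hLw1, ?_, ?_⟩
        · rw [hLw2, hwslen]
        · rw [hLw3, hwsprod]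
          have e : Δ ^ (-(((-r).toNat:ℕ):ℤ)) = Δ ^ r := by congr 1; omega
          rw [e]; group
      have hlle := hl.2 hword
      have hlile : (l:ℤ) ≤ max (-r) (s-r) := by
        have e : ((max (-r).toNat (s-r).toNat : ℕ):ℤ) = max (-r) (s-r) := by
          rw [Nat.cast_max]
          congr 1 <;> omega
        have : (l:ℤ) ≤ ((max (-r).toNat (s-r).toNat : ℕ):ℤ) := by exact_mod_cast hlle
        omega
      rcases le_total (-r) (s-r) with hc | hc
      · have hl2 : (l:ℤ) ≤ s - r := by rw [max_eq_right hc] at hlile; exact hlile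
        have hmul : (n:ℤ)*((l:ℤ)-2) ≤ (n:ℤ)*((s-r)-2) :=
          mul_le_mul_of_nonneg_left (by linarith) (by linarith)
        have e : (n:ℤ)*((s-r)-2) = (n:ℤ)*s - (n:ℤ)*r - 2*n := by ring
        exact ⟨by linarith, hup'⟩
      · have hl2 : (l:ℤ) ≤ -r := by rw [max_eq_left hc] at hlile; exact hlile
        have hmul : (n:ℤ)*((l:ℤ)-2) ≤ (n:ℤ)*((-r)-2) :=
          mul_le_mul_of_nonneg_left (by linarith) (by linarith)
        have e : (n:ℤ)*((-r)-2) = -((n:ℤ)*r) - 2*n := by ring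
        exact ⟨by linarith, hup'⟩
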